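/- The Single Issue Win criterion is correct: there exists a nonempty subset S of issues such that for all j ≠ 1, the Hamming distance from v to c1 on S is at most the Hamming distance from v to c_j on S, if and only if there exists a single issue k such that either c1 agrees with v on k, or no candidate c_j (j ≠ 1) agrees with v on k. -/
import Mathlib


/-- Hamming distance restricted to a set of issues. -/
def hamOn {ℓ : ℕ} (S : Finset (Fin ℓ)) (x y : Fin ℓ → Bool) : ℕ :=
  (S.filter (fun k => x k ≠ y k)).card

/-- correctness of the Single Issue Win criterion: c1 can win
the single-voter binary election with best-case tie-breaking on some
nonempty issue set iff some single issue k satisfies: c1 agrees with v on k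
or no other candidate agrees with v on k. -/
theorem single_issue_win_correct
    (ℓ m : ℕ) (c1 : Fin ℓ → Bool) (c : Fin m → Fin ℓ → Bool) (v : Fin ℓ → Bool) :
    (∃ S : Finset (Fin ℓ), S.Nonempty ∧
        ∀ j : Fin m, hamOn S v c1 ≤ hamOn S v (c j))
      ↔ (∃ k : Fin ℓ, c1 k = v k ∨ ∀ j : Fin m, c j k ≠ v k) := by
  constructor
  · rintro ⟨S, hS, hwin⟩
    by_cases h : ∃ k ∈ S, c1 k = v k
    · obtain ⟨k, _, hk⟩ := h
      exact ⟨k, Or.inl hk⟩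
    · push_neg at h
      obtain ⟨k, hkS⟩ := hS
      refine ⟨k, Or.inr fun j hj => ?_⟩
      have h1 : hamOn S v c1 = S.card := by
        unfold hamOn
        congr 1
        apply Finset.filter_true_of_mem
        intro x hx
        exact fun hv => h x hx hv.symm
      have h2 : hamOn S v (c j) ≤ S.card := Finset.card_filter_le _ _
      have heq : hamOn S v (c j) = S.card := le_antisymm h2 (h1 ▸ hwin j)
      have : S.filter (fun x => v x ≠ c j x) = S :=
        Finset.eq_of_subset_of_card_le (Finset.filter_subset _ _) (le_of_eq heq.symm)
      have hk := Finset.mem_filter.mp (this ▸ hkS)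
      exact hk.2 hj.symm
  · rintro ⟨k, hk⟩
    refine ⟨{k}, Finset.singleton_nonempty k, fun j => ?_⟩
    rcases hk with hk | hk
    · have : hamOn {k} v c1 = 0 := by
        simp [hamOn, Finset.filter_singleton, hk.symm]
      omega
    · have : hamOn {k} v (c j) = 1 := by
        have hne : ¬ (v k = c j k) := fun h => hk j h.symm
        simp [hamOn, Finset.filter_singleton, hne]
      rw [this]
      exact le_trans (Finset.card_filter_le _ _) (by simp)
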